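/- If T is a random tree with law π satisfying the Markov hypotheses with tree-shift f, then for every v ∈ V, conditionally on T(v) = 1 the random variables T(w), w ∈ f⁻¹(v), are independent; that is, for every function ε : f⁻¹(v) → {0,1}, P(T(w) = ε(w) for all w ∈ f⁻¹(v) | T(v)=1) = Π_{w∈f⁻¹(v)} P(T(w) = ε(w) | T(v)=1). -/

import Mathlib

open Finset
open scoped Classical

/-- The probability, under the law `π` on the finite collection `TT` of trees,
of the event `E`. -/
noncomputable def prOf {A : Type*} [DecidableEq A]
    (TT : Finset (Finset (List A))) (π : Finset (List A) → ℝ)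
    (E : Finset (List A) → Prop) : ℝ :=
  ∑ t ∈ TT, if E t then π t else 0

/-- The mean occupation `μ_π(v) = P(T(v) = 1)` of node `v`. -/
noncomputable def muOf {A : Type*} [DecidableEq A]
    (TT : Finset (Finset (List A))) (π : Finset (List A) → ℝ) (v : List A) : ℝ :=
  prOf TT π (fun t => v ∈ t)

/-- `f` is a tree-shift on `V`: for each nonempty node `w ∈ V`, `f w` is the father or
a brother of `w`, and some iterate of `f` sends `w` to the root `λ = []`. -/
def IsTreeShift {A : Type*} (V : Finset (List A)) (f : List A → List A) : Prop :=
  (∀ (a : A) (u : List A), (a :: u) ∈ V →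
      f (a :: u) = u ∨ ∃ b : A, b ≠ a ∧ f (a :: u) = b :: u) ∧
  (∀ v ∈ V, v ≠ [] → ∃ k : ℕ, f^[k] v = [])

/-- The Markov hypotheses for a random tree with law `π` (supported on the finite
collection `TT` of trees with node set `V`) with respect to the tree-shift `f`:
(a) `0 < μ_π(w) < μ_π(f w) < 1`; (b) `P(T(w) = 1, T(f w) = 0) = 0`;
(c) the Markov conditional-probability property. -/
def MarkovHyp {A : Type*} [DecidableEq A] (V : Finset (List A))
    (TT : Finset (Finset (List A))) (π : Finset (List A) → ℝ)
    (f : List A → List A) : Prop :=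
  (∀ w ∈ V, w ≠ [] →
      0 < muOf TT π w ∧ muOf TT π w < muOf TT π (f w) ∧ muOf TT π (f w) < 1) ∧
  (∀ w ∈ V, w ≠ [] → prOf TT π (fun t => w ∈ t ∧ f w ∉ t) = 0) ∧
  (∀ w ∈ V, w ≠ [] → ∀ I J : Finset (List A), I ⊆ V → J ⊆ V →
      f w ∈ I → w ∉ I ∪ J →
      0 < prOf TT π (fun t => I ⊆ t ∧ ∀ u ∈ J, u ∉ t) →
      prOf TT π (fun t => w ∈ t ∧ I ⊆ t ∧ ∀ u ∈ J, u ∉ t) /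
          prOf TT π (fun t => I ⊆ t ∧ ∀ u ∈ J, u ∉ t) =
        prOf TT π (fun t => w ∈ t ∧ f w ∈ t) / prOf TT π (fun t => f w ∈ t))

lemma prOf_congr' {A : Type*} [DecidableEq A]
    (TT : Finset (Finset (List A))) (π : Finset (List A) → ℝ)
    {E E' : Finset (List A) → Prop} (h : ∀ t, E t ↔ E' t) :
    prOf TT π E = prOf TT π E' := by
  unfold prOf
  refine Finset.sum_congr rfl fun t _ => ?_
  by_cases ht : E t
  · rw [if_pos ht, if_pos ((h t).1 ht)]
  · rw [if_neg ht, if_neg (fun h' => ht ((h t).2 h'))]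

lemma prOf_nonneg' {A : Type*} [DecidableEq A]
    (TT : Finset (Finset (List A))) (π : Finset (List A) → ℝ)
    (hπ0 : ∀ t, 0 ≤ π t) (E : Finset (List A) → Prop) :
    0 ≤ prOf TT π E := by
  unfold prOf
  refine Finset.sum_nonneg fun t _ => ?_
  split_ifs
  · exact hπ0 t
  · exact le_refl 0

lemma prOf_mono' {A : Type*} [DecidableEq A]
    (TT : Finset (Finset (List A))) (π : Finset (List A) → ℝ)
    (hπ0 : ∀ t, 0 ≤ π t) {E E' : Finset (List A) → Prop}
    (h : ∀ t, E t → E' t) : prOf TT π E ≤ prOf TT π E' := by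
  unfold prOf
  refine Finset.sum_le_sum fun t _ => ?_
  by_cases ht : E t
  · rw [if_pos ht, if_pos (h t ht)]
  · rw [if_neg ht]
    split_ifs
    · exact hπ0 t
    · exact le_refl 0

lemma prOf_split' {A : Type*} [DecidableEq A]
    (TT : Finset (Finset (List A))) (π : Finset (List A) → ℝ)
    (E P : Finset (List A) → Prop) :
    prOf TT π E
      = prOf TT π (fun t => E t ∧ P t) + prOf TT π (fun t => E t ∧ ¬ P t) := by
  unfold prOf
  rw [← Finset.sum_add_distrib]
  refine Finset.sum_congr rfl fun t _ => ?_
  by_cases hE : E t <;> by_cases hP : P t <;> simp [hE, hP]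


/-- Lemma A.3, independence part: if the random tree `T` with law `π`
satisfies the Markov hypotheses with tree-shift `f`, then for every `v ∈ V`, conditionally
on `T(v) = 1` the variables `T(w)`, `w ∈ f⁻¹(v)`, are independent: for every
`ε : f⁻¹(v) → {0,1}`,
`P(T(w) = ε(w) ∀ w ∈ f⁻¹(v) | T(v) = 1) = ∏_{w ∈ f⁻¹(v)} P(T(w) = ε(w) | T(v) = 1)`. -/
theorem stmt_4
    {A : Type*} [Fintype A] [DecidableEq A] [Nonempty A]
    (L : ℕ) (hL : 0 < L)
    (V : Finset (List A)) (hV : ∀ l : List A, l ∈ V ↔ l.length ≤ L)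
    (TT : Finset (Finset (List A)))
    (hTT : ∀ t, t ∈ TT ↔ t ⊆ V ∧ ∀ (a : A) (w : List A), a :: w ∈ t → w ∈ t)
    (π : Finset (List A) → ℝ)
    (hπ0 : ∀ t, 0 ≤ π t) (hπ1 : ∑ t ∈ TT, π t = 1)
    (f : List A → List A) (hf : IsTreeShift V f)
    (hM : MarkovHyp V TT π f) :
    ∀ v ∈ V, ∀ ε : List A → Bool,
      prOf TT π (fun t => v ∈ t ∧
            ∀ w ∈ V.filter (fun w => w ≠ [] ∧ f w = v), ((w ∈ t) ↔ ε w = true)) /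
          prOf TT π (fun t => v ∈ t)
        = ∏ w ∈ V.filter (fun w => w ≠ [] ∧ f w = v),
            prOf TT π (fun t => v ∈ t ∧ ((w ∈ t) ↔ ε w = true)) /
              prOf TT π (fun t => v ∈ t) := by
  -- f maps nonempty nodes of V into V
  have hfV : ∀ x ∈ V, x ≠ [] → f x ∈ V := by
    intro x hx hne
    obtain ⟨a, u, rfl⟩ : ∃ a u, x = a :: u := by
      cases x with
      | nil => exact absurd rfl hne
      | cons a u => exact ⟨a, u, rfl⟩
    have hlen : (a :: u).length ≤ L := (hV _).1 hx
    rcases hf.1 a u hx with h | ⟨b, _, h⟩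
    · rw [h, hV]; simp at hlen ⊢; omega
    · rw [h, hV]; simpa using hlen
  -- f has no fixed points on nonempty nodes
  have hfx_ne : ∀ x ∈ V, x ≠ [] → f x ≠ x := by
    intro x hx hne
    obtain ⟨a, u, rfl⟩ : ∃ a u, x = a :: u := by
      cases x with
      | nil => exact absurd rfl hne
      | cons a u => exact ⟨a, u, rfl⟩
    rcases hf.1 a u hx with h | ⟨b, hb, h⟩
    · rw [h]; intro heq
      have := congrArg List.length heq
      simp at this
    · rw [h]; intro heq
      injection heq with h1 _
      exact hb h1
  -- there is a nonempty node sent to the root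
  have hroot : ∃ u ∈ V, u ≠ [] ∧ f u = [] := by
    have hstep : ∀ k : ℕ, ∀ x : List A, x ∈ V → x ≠ [] → f^[k] x = [] →
        ∃ u ∈ V, u ≠ [] ∧ f u = [] := by
      intro k
      induction k with
      | zero => intro x hx hne h; simp at h; exact absurd h hne
      | succ k ih =>
        intro x hx hne h
        rw [Function.iterate_succ_apply] at h
        by_cases hfx : f x = []
        · exact ⟨x, hx, hne, hfx⟩
        · exact ih (f x) (hfV x hx hne) hfx h
    obtain ⟨a⟩ := ‹Nonempty A›
    have h1 : [a] ∈ V := (hV _).2 (by simpa using Nat.succ_le_of_lt hL)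
    obtain ⟨k, hk⟩ := hf.2 [a] h1 (by simp)
    exact hstep k [a] h1 (by simp) hk
  -- the root has positive measure
  have hmu0 : 0 < prOf TT π (fun t => ([] : List A) ∈ t) := by
    obtain ⟨u, huV, hune, hfu⟩ := hroot
    obtain ⟨h0, h1, _⟩ := hM.1 u huV hune
    rw [hfu] at h1
    exact lt_trans h0 h1
  intro v hv ε
  have hμv : 0 < prOf TT π (fun t => v ∈ t) := by
    by_cases hne : v = []
    · subst hne; exact hmu0
    · exact (hM.1 v hv hne).1
  have key : ∀ S : Finset (List A), S ⊆ V.filter (fun w => w ≠ [] ∧ f w = v) →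
      prOf TT π (fun t => v ∈ t ∧ ∀ w ∈ S, ((w ∈ t) ↔ ε w = true))
        = prOf TT π (fun t => v ∈ t) *
          ∏ w ∈ S, prOf TT π (fun t => v ∈ t ∧ ((w ∈ t) ↔ ε w = true)) /
              prOf TT π (fun t => v ∈ t) := by
    intro S
    induction S using Finset.induction_on with
    | empty =>
      intro _
      rw [Finset.prod_empty, mul_one]
      exact prOf_congr' TT π (fun t => by simp)
    | @insert w S hwS ih =>
      intro hsub
      have hwW := hsub (Finset.mem_insert_self w S)
      rw [Finset.mem_filter] at hwW
      obtain ⟨hwV, hwne, hfw⟩ := hwW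
      have hSsub : S ⊆ V.filter (fun w => w ≠ [] ∧ f w = v) :=
        fun x hx => hsub (Finset.mem_insert_of_mem hx)
      have hIH := ih hSsub
      have hwv : w ≠ v := fun h => hfx_ne w hwV hwne (by rw [hfw, h])
      rcases (prOf_nonneg' TT π hπ0
          (fun t => v ∈ t ∧ ∀ u ∈ S, ((u ∈ t) ↔ ε u = true))).lt_or_eq with hpos | hzero
      · -- positive case: apply Markov hypothesis (c)
        set I : Finset (List A) := insert v (S.filter (fun u => ε u = true)) with hI
        set J : Finset (List A) := S.filter (fun u => ε u = false) with hJ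
        have hEq : ∀ t : Finset (List A),
            (I ⊆ t ∧ ∀ u ∈ J, u ∉ t) ↔
              (v ∈ t ∧ ∀ u ∈ S, ((u ∈ t) ↔ ε u = true)) := by
          intro t
          constructor
          · rintro ⟨h1, h2⟩
            rw [Finset.insert_subset_iff] at h1
            refine ⟨h1.1, fun u hu => ?_⟩
            by_cases hε : ε u = true
            · simp only [hε, iff_true]
              exact h1.2 (Finset.mem_filter.2 ⟨hu, hε⟩)
            · have hε' : ε u = false := by simpa using hε
              simp only [hε']
              have := h2 u (Finset.mem_filter.2 ⟨hu, hε'⟩)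
              simp [this]
          · rintro ⟨h1, h2⟩
            refine ⟨Finset.insert_subset_iff.2 ⟨h1, fun u hu => ?_⟩, fun u hu => ?_⟩
            · rw [Finset.mem_filter] at hu
              exact (h2 u hu.1).2 hu.2
            · rw [Finset.mem_filter] at hu
              intro hut
              have := (h2 u hu.1).1 hut
              rw [hu.2] at this
              exact Bool.false_ne_true this
        have hIV : I ⊆ V := by
          refine Finset.insert_subset hv ?_
          intro x hx
          rw [Finset.mem_filter] at hx
          exact Finset.mem_of_mem_filter x (hSsub hx.1)
        have hJV : J ⊆ V := by
          intro x hx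
          rw [Finset.mem_filter] at hx
          exact Finset.mem_of_mem_filter x (hSsub hx.1)
        have hvI : f w ∈ I := by rw [hfw]; exact Finset.mem_insert_self v _
        have hwIJ : w ∉ I ∪ J := by
          simp only [Finset.mem_union, Finset.mem_insert, Finset.mem_filter, hI, hJ]
          push_neg
          exact ⟨⟨hwv, fun h => absurd h hwS⟩, fun h => absurd h hwS⟩
        have hposIJ : 0 < prOf TT π (fun t => I ⊆ t ∧ ∀ u ∈ J, u ∉ t) := by
          rw [prOf_congr' TT π hEq]; exact hpos
        have hc := hM.2.2 w hwV hwne I J hIV hJV hvI hwIJ hposIJ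
        rw [hfw] at hc
        rw [prOf_congr' TT π (E' := fun t => w ∈ t ∧ v ∈ t ∧
              ∀ u ∈ S, ((u ∈ t) ↔ ε u = true)) (fun t => and_congr Iff.rfl (hEq t)),
            prOf_congr' TT π hEq] at hc
        have hcomm : prOf TT π (fun t => w ∈ t ∧ v ∈ t)
            = prOf TT π (fun t => v ∈ t ∧ w ∈ t) :=
          prOf_congr' TT π (fun t => and_comm)
        rw [hcomm] at hc
        have hmulc : prOf TT π (fun t => w ∈ t ∧ v ∈ t ∧
              ∀ u ∈ S, ((u ∈ t) ↔ ε u = true))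
            = prOf TT π (fun t => v ∈ t ∧ ∀ u ∈ S, ((u ∈ t) ↔ ε u = true)) *
              (prOf TT π (fun t => v ∈ t ∧ w ∈ t) / prOf TT π (fun t => v ∈ t)) := by
          field_simp at hc ⊢
          linear_combination hc
        cases hεw : ε w with
        | true =>
          have hLHS : prOf TT π (fun t => v ∈ t ∧
                ∀ u ∈ insert w S, ((u ∈ t) ↔ ε u = true))
              = prOf TT π (fun t => w ∈ t ∧ v ∈ t ∧
                ∀ u ∈ S, ((u ∈ t) ↔ ε u = true)) := by
            refine prOf_congr' TT π (fun t => ?_)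
            simp only [Finset.forall_mem_insert, hεw, iff_true]
            tauto
          have hpw : prOf TT π (fun t => v ∈ t ∧ ((w ∈ t) ↔ ε w = true))
              = prOf TT π (fun t => v ∈ t ∧ w ∈ t) := by
            refine prOf_congr' TT π (fun t => ?_)
            simp [hεw]
          rw [hLHS, hmulc, hIH, Finset.prod_insert hwS, hpw]
          ring
        | false =>
          have hLHS : prOf TT π (fun t => v ∈ t ∧
                ∀ u ∈ insert w S, ((u ∈ t) ↔ ε u = true))
              = prOf TT π (fun t => (v ∈ t ∧
                ∀ u ∈ S, ((u ∈ t) ↔ ε u = true)) ∧ ¬ (w ∈ t)) := by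
            refine prOf_congr' TT π (fun t => ?_)
            simp only [Finset.forall_mem_insert, hεw]
            constructor
            · rintro ⟨h1, h2, h3⟩
              refine ⟨⟨h1, h3⟩, fun hw => Bool.false_ne_true (h2.1 hw)⟩
            · rintro ⟨⟨h1, h3⟩, h2⟩
              exact ⟨h1, ⟨fun hw => absurd hw h2, fun h => absurd h (Bool.false_ne_true)⟩, h3⟩
          have hsplit := prOf_split' TT π
            (fun t => v ∈ t ∧ ∀ u ∈ S, ((u ∈ t) ↔ ε u = true)) (fun t => w ∈ t)
          have hcomm2 : prOf TT π (fun t => (v ∈ t ∧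
                ∀ u ∈ S, ((u ∈ t) ↔ ε u = true)) ∧ w ∈ t)
              = prOf TT π (fun t => w ∈ t ∧ v ∈ t ∧
                ∀ u ∈ S, ((u ∈ t) ↔ ε u = true)) :=
            prOf_congr' TT π (fun t => by tauto)
          have hpw : prOf TT π (fun t => v ∈ t ∧ ((w ∈ t) ↔ ε w = true))
              = prOf TT π (fun t => v ∈ t) - prOf TT π (fun t => v ∈ t ∧ w ∈ t) := by
            have hs2 := prOf_split' TT π (fun t => v ∈ t) (fun t => w ∈ t)
            have : prOf TT π (fun t => v ∈ t ∧ ((w ∈ t) ↔ ε w = true))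
                = prOf TT π (fun t => v ∈ t ∧ ¬ (w ∈ t)) := by
              refine prOf_congr' TT π (fun t => ?_)
              simp [hεw]
            rw [this]
            linarith [hs2]
          rw [hLHS, Finset.prod_insert hwS, hpw]
          have hmain : prOf TT π (fun t => (v ∈ t ∧
                ∀ u ∈ S, ((u ∈ t) ↔ ε u = true)) ∧ ¬ (w ∈ t))
              = prOf TT π (fun t => v ∈ t ∧ ∀ u ∈ S, ((u ∈ t) ↔ ε u = true))
                - prOf TT π (fun t => w ∈ t ∧ v ∈ t ∧
                  ∀ u ∈ S, ((u ∈ t) ↔ ε u = true)) := by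
            rw [← hcomm2]; linarith [hsplit]
          rw [hmain, hmulc, hIH]
          field_simp
      · -- zero case
        have h1 : prOf TT π (fun t => v ∈ t ∧
            ∀ u ∈ insert w S, ((u ∈ t) ↔ ε u = true)) = 0 := by
          refine le_antisymm ?_ (prOf_nonneg' TT π hπ0 _)
          calc prOf TT π (fun t => v ∈ t ∧ ∀ u ∈ insert w S, ((u ∈ t) ↔ ε u = true))
              ≤ prOf TT π (fun t => v ∈ t ∧ ∀ u ∈ S, ((u ∈ t) ↔ ε u = true)) := by
                refine prOf_mono' TT π hπ0 (fun t ht => ?_)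
                exact ⟨ht.1, fun u hu => ht.2 u (Finset.mem_insert_of_mem hu)⟩
            _ = 0 := hzero.symm
        rw [h1, Finset.prod_insert hwS]
        rw [show prOf TT π (fun t => v ∈ t) *
            (prOf TT π (fun t => v ∈ t ∧ ((w ∈ t) ↔ ε w = true)) /
                prOf TT π (fun t => v ∈ t) *
              ∏ u ∈ S, prOf TT π (fun t => v ∈ t ∧ ((u ∈ t) ↔ ε u = true)) /
                prOf TT π (fun t => v ∈ t))
            = (prOf TT π (fun t => v ∈ t ∧ ((w ∈ t) ↔ ε w = true)) /
                prOf TT π (fun t => v ∈ t)) *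
              (prOf TT π (fun t => v ∈ t) *
              ∏ u ∈ S, prOf TT π (fun t => v ∈ t ∧ ((u ∈ t) ↔ ε u = true)) /
                prOf TT π (fun t => v ∈ t)) from by ring]
        rw [← hIH, ← hzero, mul_zero]
  rw [key _ (Finset.Subset.refl _), mul_comm, mul_div_assoc,
    div_self (ne_of_gt hμv), mul_one]
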